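/- Let N be a quantum channel (completely positive trace-preserving linear map) on operators of a finite-dimensional Hilbert space H_A, and let |ψ⟩ = ∑_i √λ_i |i⟩_A |i⟩_B be a bipartite pure state with orthonormal families {|i⟩_A}, {|i⟩_B} and all λ_i > 0 for i in some index set S with |S| ≥ 2. If (N ⊗ id)[|ψ⟩⟨ψ|] = |ψ⟩⟨ψ|, then N[|l⟩⟨k|] = |l⟩⟨k| for all k, l ∈ S; consequently N acts as the identity on all operators supported on span{|i⟩_A : i ∈ S}, and in particular N[|η⟩⟨η|] = |η⟩⟨η| for every unit vector |η⟩ in that span. -/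

import Mathlib

set_option maxHeartbeats 1000000

open Matrix Kronecker

/-- The projector `|v⟩⟨v|` onto a vector `v` (as a matrix). -/
noncomputable def outer {n : Type*} [Fintype n] (v : n → ℂ) : Matrix n n ℂ :=
  Matrix.vecMulVec v (star v)

lemma sandwich {m : Type*} [Fintype m] (M : Matrix m m ℂ) (u w : m → ℂ) :
    M * Matrix.vecMulVec u (star w) * Mᴴ = Matrix.vecMulVec (M *ᵥ u) (star (M *ᵥ w)) := by
  ext x y
  simp only [Matrix.mul_apply, Matrix.vecMulVec_apply, Matrix.conjTranspose_apply,
    Matrix.mulVec, dotProduct, Pi.star_apply, Finset.sum_mul, Finset.mul_sum,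
    star_sum, star_mul']
  apply Finset.sum_congr rfl; intro a _
  apply Finset.sum_congr rfl; intro b _
  ring

lemma double_orth {n : Type*} [Fintype n] {ι : Type*} [Fintype ι] (f g : ι → n → ℂ) :
    ∑ x, (∑ i, f i x) * (∑ j, g j x) = ∑ i, ∑ j, ∑ x, f i x * g j x := by
  simp only [Finset.sum_mul_sum]
  rw [Finset.sum_comm]
  apply Finset.sum_congr rfl; intro i _
  rw [Finset.sum_comm]

lemma vecMulVec_smul_smul {n : Type*} [Fintype n] (a b : ℂ) (u w : n → ℂ) :
    Matrix.vecMulVec (a • u) (b • w) = (a * b) • Matrix.vecMulVec u w := by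
  ext x y
  simp only [Matrix.vecMulVec_apply, Pi.smul_apply, Matrix.smul_apply, smul_eq_mul]
  ring

lemma prod_factor {nA nB : Type*} [Fintype nA] [Fintype nB] (f : nA → ℂ) (g : nB → ℂ) :
    ∑ p : nA × nB, f p.1 * g p.2 = (∑ x, f x) * (∑ y, g y) := by
  rw [Fintype.sum_prod_type]
  exact (Finset.sum_mul_sum _ _ _ _).symm

lemma rank_one_decomp {m : Type*} [Fintype m] {r : ℕ} (v : Fin r → m → ℂ) (ψ : m → ℂ)
    (hnorm : ∑ p, star (ψ p) * ψ p = 1)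
    (h : ∀ p q, ∑ t, v t p * star (v t q) = ψ p * star (ψ q)) :
    ∃ c : Fin r → ℂ, (∑ t, c t * star (c t) = 1) ∧ ∀ t p, v t p = c t * ψ p := by
  set c : Fin r → ℂ := fun t => ∑ p, star (ψ p) * v t p with hcdef
  have hnorm' : ∑ p, ψ p * star (ψ p) = 1 := by
    rw [← hnorm]; exact Finset.sum_congr rfl fun p _ => mul_comm _ _
  have hcstar : ∀ t, star (c t) = ∑ p, ψ p * star (v t p) := by
    intro t
    simp only [hcdef, star_sum, star_mul', star_star]
  have hcsum : ∑ t, c t * star (c t) = 1 := by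
    have step : ∀ t, c t * star (c t)
        = ∑ p, ∑ q, (star (ψ p) * ψ q) * (v t p * star (v t q)) := by
      intro t
      rw [hcstar, hcdef]
      rw [Finset.sum_mul_sum]
      apply Finset.sum_congr rfl; intro p _
      apply Finset.sum_congr rfl; intro q _
      ring
    calc ∑ t, c t * star (c t)
        = ∑ t, ∑ p, ∑ q, (star (ψ p) * ψ q) * (v t p * star (v t q)) := by
          exact Finset.sum_congr rfl fun t _ => step t
      _ = ∑ p, ∑ q, (star (ψ p) * ψ q) * ∑ t, (v t p * star (v t q)) := by
          rw [Finset.sum_comm]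
          apply Finset.sum_congr rfl; intro p _
          rw [Finset.sum_comm]
          apply Finset.sum_congr rfl; intro q _
          rw [Finset.mul_sum]
      _ = ∑ p, ∑ q, (star (ψ p) * ψ p) * (ψ q * star (ψ q)) := by
          apply Finset.sum_congr rfl; intro p _
          apply Finset.sum_congr rfl; intro q _
          rw [h p q]; ring
      _ = 1 := by
          simp only [← Finset.sum_mul, ← Finset.mul_sum]
          rw [hnorm, hnorm']; ring
  refine ⟨c, hcsum, ?_⟩
  have hA : ∑ t, ∑ p, v t p * star (v t p) = 1 := by
    rw [Finset.sum_comm]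
    calc ∑ p, ∑ t, v t p * star (v t p) = ∑ p, ψ p * star (ψ p) :=
          Finset.sum_congr rfl fun p _ => h p p
      _ = 1 := hnorm'
  have expand : ∀ t, ∑ p, (v t p - c t * ψ p) * star (v t p - c t * ψ p)
      = (∑ p, v t p * star (v t p)) - c t * star (c t) := by
    intro t
    have h1 : ∑ p, v t p * star (ψ p) = c t := by
      rw [hcdef]; exact Finset.sum_congr rfl fun p _ => mul_comm _ _
    have h2 : ∑ p, ψ p * star (v t p) = star (c t) := (hcstar t).symm
    have e1 : ∀ p, (v t p - c t * ψ p) * star (v t p - c t * ψ p)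
        = v t p * star (v t p) - star (c t) * (v t p * star (ψ p))
          - c t * (ψ p * star (v t p)) + (c t * star (c t)) * (ψ p * star (ψ p)) := by
      intro p
      simp only [star_sub, star_mul']
      ring
    rw [Finset.sum_congr rfl (fun p _ => e1 p)]
    simp only [Finset.sum_add_distrib, Finset.sum_sub_distrib, ← Finset.mul_sum]
    rw [h1, h2, hnorm']
    ring
  have total : ∑ t, ∑ p, (v t p - c t * ψ p) * star (v t p - c t * ψ p) = 0 := by
    calc ∑ t, ∑ p, (v t p - c t * ψ p) * star (v t p - c t * ψ p)
        = ∑ t, ((∑ p, v t p * star (v t p)) - c t * star (c t)) :=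
          Finset.sum_congr rfl fun t _ => expand t
      _ = (∑ t, ∑ p, v t p * star (v t p)) - ∑ t, c t * star (c t) := Finset.sum_sub_distrib _ _
      _ = 0 := by rw [hA, hcsum]; ring
  have totalR : ∑ t, ∑ p, Complex.normSq (v t p - c t * ψ p) = 0 := by
    have : ((∑ t, ∑ p, Complex.normSq (v t p - c t * ψ p) : ℝ) : ℂ) = 0 := by
      push_cast
      rw [← total]
      apply Finset.sum_congr rfl; intro t _
      apply Finset.sum_congr rfl; intro p _
      rw [← Complex.mul_conj]
      simp [Complex.star_def, map_sub, _root_.map_mul]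
    exact_mod_cast this
  intro t p
  have h0 : Complex.normSq (v t p - c t * ψ p) = 0 := by
    have h1 := (Finset.sum_eq_zero_iff_of_nonneg (fun t _ => Finset.sum_nonneg
      (fun p _ => Complex.normSq_nonneg _))).mp totalR t (Finset.mem_univ t)
    exact (Finset.sum_eq_zero_iff_of_nonneg (fun p _ => Complex.normSq_nonneg _)).mp h1 p
      (Finset.mem_univ p)
  exact sub_eq_zero.mp (Complex.normSq_eq_zero.mp h0)

theorem channel_identity_on_schmidt_support {dA dB r : ℕ}
    {ι : Type} [Fintype ι] [DecidableEq ι] (hcard : 2 ≤ Fintype.card ι)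
    (K : Fin r → Matrix (Fin dA) (Fin dA) ℂ)
    (hTP : ∑ t, (K t)ᴴ * K t = 1)
    (N : Matrix (Fin dA) (Fin dA) ℂ → Matrix (Fin dA) (Fin dA) ℂ)
    (hN : ∀ ρ, N ρ = ∑ t, K t * ρ * (K t)ᴴ)
    (lam : ι → ℝ) (hlam : ∀ i, 0 < lam i) (hsum : ∑ i, lam i = 1)
    (eA : ι → Fin dA → ℂ) (eB : ι → Fin dB → ℂ)
    (honA : ∀ i j, ∑ x, star (eA i x) * eA j x = if i = j then 1 else 0)
    (honB : ∀ i j, ∑ x, star (eB i x) * eB j x = if i = j then 1 else 0)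
    (ψ : Fin dA × Fin dB → ℂ)
    (hψ : ψ = fun p => ∑ i, (Real.sqrt (lam i) : ℂ) * eA i p.1 * eB i p.2)
    (hfix : ∑ t, (K t ⊗ₖ (1 : Matrix (Fin dB) (Fin dB) ℂ)) * outer ψ *
        (K t ⊗ₖ (1 : Matrix (Fin dB) (Fin dB) ℂ))ᴴ = outer ψ) :
    (∀ k l : ι, N (Matrix.vecMulVec (eA l) (star (eA k))) =
        Matrix.vecMulVec (eA l) (star (eA k))) ∧
      (∀ c : ι → ℂ, (∑ i, ‖c i‖ ^ 2 = 1) →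
        N (outer (fun x => ∑ i, c i * eA i x)) = outer (fun x => ∑ i, c i * eA i x)) := by
  set s : ι → ℂ := fun i => (Real.sqrt (lam i) : ℂ) with hsdef
  have hs_ne : ∀ i, s i ≠ 0 := by
    intro i
    simp only [hsdef, ne_eq, Complex.ofReal_eq_zero]
    exact ne_of_gt (Real.sqrt_pos.mpr (hlam i))
  have hs_star : ∀ i, star (s i) = s i := fun i => Complex.conj_ofReal _
  have hs_sq : ∀ i, s i * s i = (lam i : ℂ) := by
    intro i
    simp only [hsdef, ← Complex.ofReal_mul]
    norm_cast
    exact Real.mul_self_sqrt (le_of_lt (hlam i))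
  -- orthonormality in the other order
  have honB' : ∀ i j, ∑ y, eB i y * star (eB j y) = if i = j then 1 else 0 := by
    intro i j
    have := congrArg star (honB i j)
    simpa [star_sum, star_mul', mul_comm, apply_ite, eq_comm] using this
  have hψ' : ∀ p : Fin dA × Fin dB, ψ p = ∑ i, s i * eA i p.1 * eB i p.2 := by
    intro p; rw [hψ]
  -- norm of ψ
  have hψnorm : ∑ p, star (ψ p) * ψ p = 1 := by
    have hstar : ∀ p, star (ψ p) = ∑ i, star (s i) * star (eA i p.1) * star (eB i p.2) := by
      intro p
      rw [hψ' p]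
      simp only [star_sum, star_mul']
    calc ∑ p, star (ψ p) * ψ p
        = ∑ p : Fin dA × Fin dB, (∑ i, star (s i) * star (eA i p.1) * star (eB i p.2))
            * (∑ j, s j * eA j p.1 * eB j p.2) := by
          apply Finset.sum_congr rfl; intro p _
          rw [hstar p, hψ' p]
      _ = ∑ i, ∑ j, ∑ p : Fin dA × Fin dB,
            (star (s i) * star (eA i p.1) * star (eB i p.2)) * (s j * eA j p.1 * eB j p.2) :=
          by
          have h := double_orth (ι := ι) (n := Fin dA × Fin dB)
            (fun i p => star (s i) * star (eA i p.1) * star (eB i p.2))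
            (fun j p => s j * eA j p.1 * eB j p.2)
          simpa using h
      _ = ∑ i, ∑ j, (star (s i) * s j) *
            ((∑ x, star (eA i x) * eA j x) * (∑ y, star (eB i y) * eB j y)) := by
          apply Finset.sum_congr rfl; intro i _
          apply Finset.sum_congr rfl; intro j _
          rw [← prod_factor (fun x => star (eA i x) * eA j x) (fun y => star (eB i y) * eB j y),
            Finset.mul_sum]
          apply Finset.sum_congr rfl; intro p _
          ring
      _ = 1 := by
          simp only [honA, honB, mul_ite, mul_one, mul_zero, ite_mul, zero_mul, one_mul,
            Finset.sum_ite_eq, Finset.sum_ite_eq', Finset.mem_univ, if_true]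
          have : ∀ i : ι, star (s i) * s i = (lam i : ℂ) := by
            intro i; rw [hs_star, hs_sq]
          rw [Finset.sum_congr rfl fun i _ => this i]
          rw [← Complex.ofReal_sum, hsum, Complex.ofReal_one]
  -- rewrite the fixed-point equation entrywise
  simp only [outer, sandwich] at hfix
  have h2 : ∀ p q, ∑ t, ((K t ⊗ₖ (1 : Matrix (Fin dB) (Fin dB) ℂ)) *ᵥ ψ) p *
      star (((K t ⊗ₖ (1 : Matrix (Fin dB) (Fin dB) ℂ)) *ᵥ ψ) q) = ψ p * star (ψ q) := by
    intro p q
    have h := congrFun (congrFun hfix p) q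
    simpa [Matrix.sum_apply, Matrix.vecMulVec_apply] using h
  obtain ⟨c, hcsum, hv⟩ := rank_one_decomp
    (fun t => (K t ⊗ₖ (1 : Matrix (Fin dB) (Fin dB) ℂ)) *ᵥ ψ) ψ hψnorm h2
  -- the Kraus operators send the |ψ⟩ to multiples of itself, entrywise over the B system
  have hKv : ∀ t x y, ∑ x', K t x x' * ψ (x', y) = c t * ψ (x, y) := by
    intro t x y
    have h := hv t (x, y)
    have hexp : ((K t ⊗ₖ (1 : Matrix (Fin dB) (Fin dB) ℂ)) *ᵥ ψ) (x, y)
        = ∑ x', K t x x' * ψ (x', y) := by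
      simp [Matrix.mulVec, dotProduct, Fintype.sum_prod_type, Matrix.one_apply,
        mul_ite, ite_mul, mul_one, mul_zero, zero_mul, Finset.sum_ite_eq, Finset.sum_ite_eq']
    rw [hexp] at h
    exact h
  -- project onto the B basis
  have hy : ∀ (f : ι → ℂ) (m : ι), ∑ y, (∑ j, f j * eB j y) * star (eB m y) = f m := by
    intro f m
    calc ∑ y, (∑ j, f j * eB j y) * star (eB m y)
        = ∑ j, f j * ∑ y, eB j y * star (eB m y) := by
          simp only [Finset.sum_mul]
          rw [Finset.sum_comm]
          apply Finset.sum_congr rfl; intro j _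
          rw [Finset.mul_sum]
          apply Finset.sum_congr rfl; intro y _
          rw [mul_assoc]
      _ = f m := by
          have honB'' : ∀ i j : ι, ∑ y, eB i y * (starRingEnd ℂ) (eB j y)
              = if i = j then 1 else 0 := by
            intro i j
            simpa [Complex.star_def] using honB' i j
          simp [honB', honB'', mul_ite, mul_one, mul_zero, Finset.sum_ite_eq,
            Finset.sum_ite_eq']
  have hKA : ∀ t i x, (K t *ᵥ eA i) x = c t * eA i x := by
    intro t i x
    have hrow : ∀ y, ∑ j, (s j * (K t *ᵥ eA j) x) * eB j y
        = c t * ∑ j, (s j * eA j x) * eB j y := by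
      intro y
      have h := hKv t x y
      calc ∑ j, (s j * (K t *ᵥ eA j) x) * eB j y
          = ∑ x', K t x x' * ψ (x', y) := by
            have e3 : ∀ x', K t x x' * ψ (x', y)
                = K t x x' * ∑ j, s j * eA j x' * eB j y := by
              intro x'; rw [hψ' (x', y)]
            rw [Finset.sum_congr rfl fun x' _ => e3 x']
            simp only [Matrix.mulVec, dotProduct, Finset.mul_sum, Finset.sum_mul]
            rw [Finset.sum_comm]
            apply Finset.sum_congr rfl; intro x' _
            apply Finset.sum_congr rfl; intro j _
            ring
        _ = c t * ψ (x, y) := h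
        _ = c t * ∑ j, (s j * eA j x) * eB j y := by
            rw [hψ' (x, y)]
    have e1 := hy (fun j => s j * (K t *ᵥ eA j) x) i
    have e2 := hy (fun j => s j * eA j x) i
    have key : s i * (K t *ᵥ eA i) x = c t * (s i * eA i x) := by
      calc s i * (K t *ᵥ eA i) x
          = ∑ y, (∑ j, (s j * (K t *ᵥ eA j) x) * eB j y) * star (eB i y) := e1.symm
        _ = ∑ y, (c t * ∑ j, (s j * eA j x) * eB j y) * star (eB i y) := by
            apply Finset.sum_congr rfl; intro y _
            rw [hrow y]
        _ = c t * ∑ y, (∑ j, (s j * eA j x) * eB j y) * star (eB i y) := by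
            rw [Finset.mul_sum]
            apply Finset.sum_congr rfl; intro y _
            ring
        _ = c t * (s i * eA i x) := by rw [e2]
    have key' : s i * (K t *ᵥ eA i) x = s i * (c t * eA i x) := by rw [key]; ring
    exact mul_left_cancel₀ (hs_ne i) key'
  have hKA' : ∀ t i, K t *ᵥ eA i = c t • eA i := by
    intro t i
    funext x
    rw [hKA t i x]
    simp
  constructor
  · intro k l
    rw [hN]
    calc ∑ t, K t * Matrix.vecMulVec (eA l) (star (eA k)) * (K t)ᴴ
        = ∑ t, (c t * star (c t)) • Matrix.vecMulVec (eA l) (star (eA k)) := by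
          apply Finset.sum_congr rfl; intro t _
          rw [sandwich, hKA' t l, hKA' t k, star_smul, vecMulVec_smul_smul]
      _ = (∑ t, c t * star (c t)) • Matrix.vecMulVec (eA l) (star (eA k)) :=
          (Finset.sum_smul).symm
      _ = Matrix.vecMulVec (eA l) (star (eA k)) := by rw [hcsum, one_smul]
  · intro cc _
    have hKη : ∀ t, K t *ᵥ (fun x => ∑ i, cc i * eA i x)
        = c t • (fun x => ∑ i, cc i * eA i x) := by
      intro t
      funext x
      have e0 : (K t *ᵥ fun x => ∑ i, cc i * eA i x) x
          = ∑ x', K t x x' * ∑ i, cc i * eA i x' := rfl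
      rw [e0]
      calc ∑ x', K t x x' * ∑ i, cc i * eA i x'
          = ∑ i, cc i * ∑ x', K t x x' * eA i x' := by
            simp only [Finset.mul_sum]
            rw [Finset.sum_comm]
            apply Finset.sum_congr rfl; intro i _
            apply Finset.sum_congr rfl; intro x' _
            ring
        _ = ∑ i, cc i * (c t * eA i x) := by
            apply Finset.sum_congr rfl; intro i _
            rw [show ∑ x', K t x x' * eA i x' = (K t *ᵥ eA i) x from rfl, hKA t i x]
        _ = (c t • fun x => ∑ i, cc i * eA i x) x := by
            simp only [Pi.smul_apply, smul_eq_mul, Finset.mul_sum]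
            apply Finset.sum_congr rfl; intro i _
            ring
    rw [hN]
    simp only [outer]
    calc ∑ t, K t * Matrix.vecMulVec (fun x => ∑ i, cc i * eA i x)
          (star (fun x => ∑ i, cc i * eA i x)) * (K t)ᴴ
        = ∑ t, (c t * star (c t)) • Matrix.vecMulVec (fun x => ∑ i, cc i * eA i x)
            (star (fun x => ∑ i, cc i * eA i x)) := by
          apply Finset.sum_congr rfl; intro t _
          rw [sandwich, hKη t, star_smul, vecMulVec_smul_smul]
      _ = (∑ t, c t * star (c t)) • Matrix.vecMulVec (fun x => ∑ i, cc i * eA i x)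
            (star (fun x => ∑ i, cc i * eA i x)) := (Finset.sum_smul).symm
      _ = Matrix.vecMulVec (fun x => ∑ i, cc i * eA i x)
            (star (fun x => ∑ i, cc i * eA i x)) := by rw [hcsum, one_smul]
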